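/- A Polish group G is locally Roelcke precompact if and only if G is locally bounded and every coarsely bounded subset of G is Roelcke precompact. -/

import Mathlib

open scoped Pointwise

/-- A subset `A` of a topological group `G` is *Roelcke precompact* if for every
neighborhood `V` of the identity there is a finite set `F ⊆ G` with `A ⊆ V * F * V`,
where `V * F * V = {v * f * w : v, w ∈ V, f ∈ F}`. -/
def RoelckePrecompact {G : Type*} [Group G] [TopologicalSpace G] (A : Set G) : Prop :=
  ∀ V ∈ nhds (1 : G), ∃ F : Finset G, A ⊆ V * (F : Set G) * V

/-- A topological group is *locally Roelcke precompact* if some open neighborhood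
of the identity is Roelcke precompact. -/
def LocallyRoelckePrecompact (G : Type*) [Group G] [TopologicalSpace G] : Prop :=
  ∃ U : Set G, IsOpen U ∧ (1 : G) ∈ U ∧ RoelckePrecompact U

/-- A subset `A` of a topological group is *coarsely bounded* if every continuous
left-invariant pseudometric on `G` assigns finite diameter to `A`. -/
def IsCoarselyBounded {G : Type*} [Group G] [TopologicalSpace G] (A : Set G) : Prop :=
  ∀ d : G → G → ℝ,
    Continuous (fun p : G × G => d p.1 p.2) →
    (∀ x, d x x = 0) → (∀ x y, d x y = d y x) → (∀ x y z, d x z ≤ d x y + d y z) →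
    (∀ g x y, d (g * x) (g * y) = d x y) →
    ∃ C : ℝ, ∀ x ∈ A, ∀ y ∈ A, d x y ≤ C

open Set
set_option linter.unusedSectionVars false
set_option maxHeartbeats 1000000

section rpcalg
variable {G : Type*} [Group G] [TopologicalSpace G] [IsTopologicalGroup G]

omit [IsTopologicalGroup G] in
lemma rpc_mono {A B : Set G} (h : A ⊆ B) (hB : RoelckePrecompact B) :
    RoelckePrecompact A := fun V hV => by
  obtain ⟨F, hF⟩ := hB V hV; exact ⟨F, h.trans hF⟩

omit [IsTopologicalGroup G] in
lemma rpc_finset (F : Finset G) : RoelckePrecompact (F : Set G) := by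
  intro V hV
  refine ⟨F, fun x hx => ?_⟩
  exact ⟨1 * x, Set.mul_mem_mul (mem_of_mem_nhds hV) hx, 1, mem_of_mem_nhds hV, by simp⟩

lemma rpc_conj (g h : G) {A : Set G} (hA : RoelckePrecompact A) :
    RoelckePrecompact ({g} * A * {h}) := by
  classical
  intro V hV
  have hc1 : Continuous fun x : G => g * x * g⁻¹ := by continuity
  have hc2 : Continuous fun x : G => h⁻¹ * x * h := by continuity
  have h1 : (fun x : G => g * x * g⁻¹) ⁻¹' V ∈ nhds 1 := by
    apply hc1.continuousAt.preimage_mem_nhds; simpa using hV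
  have h2 : (fun x : G => h⁻¹ * x * h) ⁻¹' V ∈ nhds 1 := by
    apply hc2.continuousAt.preimage_mem_nhds; simpa using hV
  obtain ⟨F, hF⟩ := hA _ (Filter.inter_mem h1 h2)
  refine ⟨F.image fun f => g * f * h, fun x hx => ?_⟩
  obtain ⟨y, hy, z, hz, rfl⟩ := hx
  obtain ⟨w, hw, a, ha, rfl⟩ := hy
  rw [Set.mem_singleton_iff] at hw hz
  obtain ⟨y2, hy2, v2, hv2, rfl⟩ := hF ha
  obtain ⟨v1, hv1, f, hf, rfl⟩ := hy2
  refine ⟨(g * v1 * g⁻¹) * (g * f * h), Set.mul_mem_mul hv1.1 ?_, h⁻¹ * v2 * h, hv2.2, ?_⟩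
  · rw [Finset.coe_image]; exact Set.mem_image_of_mem _ hf
  · rw [hw, hz]; group

lemma rpc_mul {U : Set G} (hUo : IsOpen U) (hU1 : (1:G) ∈ U) (hU : RoelckePrecompact U)
    {A B : Set G} (hA : RoelckePrecompact A) (hB : RoelckePrecompact B) :
    RoelckePrecompact (A * B) := by
  classical
  intro V hV
  have hVU : V ∩ U ∈ nhds (1:G) := Filter.inter_mem hV (hUo.mem_nhds hU1)
  obtain ⟨V₁, hV₁o, hV₁1, hV₁sub⟩ := exists_open_nhds_one_mul_subset hVU
  have hV₁ : V₁ ∈ nhds (1:G) := hV₁o.mem_nhds hV₁1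
  obtain ⟨F, hF⟩ := hA V₁ hV₁
  obtain ⟨E, hE⟩ := hB V₁ hV₁
  have key : ∀ f e : G, ∃ Ffe : Finset G, {f} * (V ∩ U) * {e} ⊆ V₁ * (Ffe : Set G) * V₁ :=
    fun f e => rpc_conj f e (rpc_mono inter_subset_right hU) V₁ hV₁
  choose Ffe hFfe using key
  refine ⟨F.biUnion fun f => E.biUnion fun e => Ffe f e, ?_⟩
  rintro x ⟨a, ha, b, hb, rfl⟩
  obtain ⟨y, hy, v2, hv2, rfl⟩ := hF ha
  obtain ⟨v1, hv1, f, hf, rfl⟩ := hy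
  obtain ⟨z, hz, w2, hw2, rfl⟩ := hE hb
  obtain ⟨w1, hw1, e, he, rfl⟩ := hz
  have hmid : f * (v2 * w1) * e ∈ {f} * (V ∩ U) * {e} :=
    Set.mul_mem_mul (Set.mul_mem_mul rfl (hV₁sub (Set.mul_mem_mul hv2 hw1))) rfl
  obtain ⟨y2, hy2, u2, hu2, hy2eq⟩ := hFfe f e hmid
  obtain ⟨u1, hu1, c, hc, rfl⟩ := hy2
  have hcF : c ∈ (↑(F.biUnion fun f => E.biUnion fun e => Ffe f e) : Set G) := by
    simp only [Finset.coe_biUnion, Set.mem_iUnion]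
    exact ⟨f, hf, e, he, hc⟩
  refine ⟨(v1 * u1) * c, Set.mul_mem_mul ((hV₁sub (Set.mul_mem_mul hv1 hu1)).1) hcF,
    u2 * w2, (hV₁sub (Set.mul_mem_mul hu2 hw2)).1, ?_⟩
  show v1 * u1 * c * (u2 * w2) = v1 * f * v2 * (w1 * e * w2)
  have h9 : u1 * c * u2 = f * (v2 * w1) * e := hy2eq
  have : v1 * f * v2 * (w1 * e * w2) = v1 * (u1 * c * u2) * w2 := by rw [h9]; group
  rw [this]; group

lemma rpc_pow {U : Set G} (hUo : IsOpen U) (hU1 : (1:G) ∈ U) (hU : RoelckePrecompact U)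
    {C : Set G} (hC : RoelckePrecompact C) : ∀ m : ℕ, RoelckePrecompact (C ^ m)
  | 0 => by
    rw [pow_zero]
    rw [← Finset.coe_one]; exact rpc_finset 1
  | (m+1) => by
    rw [pow_succ]
    exact rpc_mul hUo hU1 hU (rpc_pow hUo hU1 hU hC m) hC
end rpcalg

namespace CBAux
variable {G : Type*} [Group G]

/-- A step of a decomposition: a group element with a label saying whether it is
a generator step (`inl k`, cost `k+1`) or a small step (`inr j`, cost `2⁻¹^j`). -/
abbrev Step (G : Type*) := G × (ℕ ⊕ ℕ)

noncomputable def cost (p : Step G) : ℝ :=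
  Sum.elim (fun k : ℕ => (k : ℝ) + 1) (fun j => (2⁻¹ : ℝ) ^ j) p.2

noncomputable def costL (L : List (Step G)) : ℝ := (L.map cost).sum

def prodL (L : List (Step G)) : G := (L.map Prod.fst).prod

def Adm (Vc : ℕ → Set G) (gs : ℕ → G) (p : Step G) : Prop :=
  Sum.elim (fun k => p.1 = gs k ∨ p.1 = (gs k)⁻¹) (fun j => p.1 ∈ Vc j) p.2

lemma cost_nonneg (p : Step G) : 0 ≤ cost p := by
  rcases p with ⟨a, k | j⟩  <;> simp [cost] <;> positivity

lemma cost_inl (a : G) (k : ℕ) : cost (a, Sum.inl k) = (k:ℝ) + 1 := rfl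
lemma cost_inr (a : G) (j : ℕ) : cost (a, Sum.inr j) = (2⁻¹:ℝ) ^ j := rfl

lemma costL_nil : costL ([] : List (Step G)) = 0 := rfl
lemma costL_cons (p : Step G) (L : List (Step G)) : costL (p :: L) = cost p + costL L := by
  simp [costL]
lemma costL_append (L₁ L₂ : List (Step G)) : costL (L₁ ++ L₂) = costL L₁ + costL L₂ := by
  simp [costL]
lemma costL_nonneg (L : List (Step G)) : 0 ≤ costL L :=
  List.sum_nonneg (by rintro x hx; obtain ⟨p, _, rfl⟩ := List.mem_map.1 hx; exact cost_nonneg p)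
lemma cost_le_costL {p : Step G} {L : List (Step G)} (h : p ∈ L) : cost p ≤ costL L :=
  List.single_le_sum (by rintro x hx; obtain ⟨q, _, rfl⟩ := List.mem_map.1 hx; exact cost_nonneg q)
    _ (List.mem_map.2 ⟨p, h, rfl⟩)

lemma prodL_nil : prodL ([] : List (Step G)) = 1 := rfl
lemma prodL_cons (p : Step G) (L : List (Step G)) : prodL (p :: L) = p.1 * prodL L := by
  simp [prodL]
lemma prodL_append (L₁ L₂ : List (Step G)) : prodL (L₁ ++ L₂) = prodL L₁ * prodL L₂ := by
  simp [prodL]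

/-- Split a list into a maximal prefix of cost `< b` and the rest. -/
noncomputable def splitB : ℝ → List (Step G) → List (Step G) × List (Step G)
  | _, [] => ([], [])
  | b, a :: L =>
    if cost a < b then ((a :: (splitB (b - cost a) L).1), (splitB (b - cost a) L).2)
    else ([], a :: L)

lemma splitB_append : ∀ (b : ℝ) (L : List (Step G)), (splitB b L).1 ++ (splitB b L).2 = L
  | _, [] => rfl
  | b, a :: L => by
    rw [splitB]
    split
    · simpa using splitB_append (b - cost a) L
    · rfl

lemma splitB_cost : ∀ (b : ℝ), 0 < b → ∀ (L : List (Step G)), costL (splitB b L).1 < b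
  | b, hb, [] => by simpa [splitB, costL_nil] using hb
  | b, hb, a :: L => by
    rw [splitB]
    split
    · next h =>
      have := splitB_cost (b - cost a) (by linarith) L
      simp only [costL_cons]; linarith
    · simpa [costL_nil] using hb

lemma splitB_small : ∀ (b : ℝ) (L : List (Step G)) (p : Step G),
    p ∈ (splitB b L).1 → cost p < b
  | b, [], p => by simp [splitB]
  | b, a :: L, p => by
    rw [splitB]
    split
    · next h =>
      intro hp
      rcases List.mem_cons.1 hp with rfl | hp
      · exact h
      · have := splitB_small (b - cost a) L p hp
        have := cost_nonneg a
        linarith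
    · simp

lemma splitB_rest : ∀ (b : ℝ) (L : List (Step G)) (e : Step G) (R' : List (Step G)),
    (splitB b L).2 = e :: R' → b ≤ costL (splitB b L).1 + cost e
  | b, [], e, R' => by simp [splitB]
  | b, a :: L, e, R' => by
    rw [splitB]
    split
    · next h =>
      intro heq
      have := splitB_rest (b - cost a) L e R' heq
      simp only [costL_cons]; linarith
    · next h =>
      intro heq
      injection heq with h1 h2
      subst h1
      simp only [costL_nil, not_lt] at h ⊢
      linarith


section chain
variable (Vc : ℕ → Set G) (gs : ℕ → G)
variable (h1 : ∀ n, (1:G) ∈ Vc n)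
variable (h3 : ∀ n, Vc (n+1) * Vc (n+1) * Vc (n+1) ⊆ Vc n)

include h1 h3 in
lemma Vc_mono : ∀ {n j : ℕ}, n ≤ j → Vc j ⊆ Vc n := by
  intro n j h
  induction j with
  | zero =>
    have : n = 0 := Nat.le_zero.1 h
    subst this; exact fun x hx => hx
  | succ j ih =>
    rcases Nat.eq_or_lt_of_le h with rfl | hlt
    · exact fun x hx => hx
    · intro x hx
      have hx' : x * 1 * 1 ∈ Vc j := h3 j (Set.mul_mem_mul (Set.mul_mem_mul hx (h1 _)) (h1 _))
      exact ih (by omega) (by simpa using hx')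

include h1 h3 in
lemma Vc_sq (n : ℕ) : Vc (n+1) * Vc (n+1) ⊆ Vc n := by
  rintro x ⟨a, ha, b, hb, rfl⟩
  have : a * b * 1 ∈ Vc n := h3 n (Set.mul_mem_mul (Set.mul_mem_mul ha hb) (h1 _))
  simpa using this

include h1 h3 in
lemma chainA : ∀ (len : ℕ) (L : List (Step G)), L.length ≤ len →
    (∀ p ∈ L, ∃ j, p.2 = Sum.inr j ∧ p.1 ∈ Vc j) →
    ∀ n : ℕ, costL L < (2⁻¹:ℝ) ^ n → prodL L ∈ Vc n := by
  intro len
  induction len with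
  | zero =>
    intro L hL _ n _
    rw [List.length_eq_zero_iff.1 (Nat.le_zero.1 hL)]
    exact h1 n
  | succ len ih =>
    intro L hL hadm n hcost
    rcases List.eq_nil_or_concat L with rfl | ⟨L', a, rfl⟩
    · exact h1 n
    rw [List.concat_eq_append] at hL hadm hcost ⊢
    have helt : ∀ p ∈ L' ++ [a], (p : Step G).1 ∈ Vc (n+1) := by
      intro p hp
      obtain ⟨j, hj2, hjmem⟩ := hadm p hp
      have hcp : cost p = (2⁻¹:ℝ) ^ j := by rw [← cost_inr p.1 j, ← hj2]
      have hlt : (2⁻¹:ℝ) ^ j < (2⁻¹:ℝ) ^ n := lt_of_le_of_lt (hcp ▸ cost_le_costL hp) hcost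
      have hj : n < j := by
        have := (pow_lt_pow_iff_right_of_lt_one₀ (by norm_num) (by norm_num)).1 hlt
        omega
      exact Vc_mono Vc h1 h3 hj hjmem
    have hbpos : (0:ℝ) < (2⁻¹:ℝ)^(n+1) := by positivity
    have hPcost : costL (splitB ((2⁻¹:ℝ)^(n+1)) (L' ++ [a])).1 < (2⁻¹:ℝ)^(n+1) :=
      splitB_cost _ hbpos _
    have hPR := splitB_append ((2⁻¹:ℝ)^(n+1)) (L' ++ [a])
    cases hsp : (splitB ((2⁻¹:ℝ)^(n+1)) (L' ++ [a])).2 with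
    | nil =>
      rw [hsp, List.append_nil] at hPR
      have hcost' : costL (L' ++ [a]) < (2⁻¹:ℝ)^(n+1) := by rw [← hPR]; exact hPcost
      rw [costL_append, costL_cons, costL_nil] at hcost'
      have hL'cost : costL L' < (2⁻¹:ℝ)^(n+1) := by
        have := cost_nonneg a; linarith
      have hlen' : L'.length ≤ len := by simp at hL; omega
      have hPL' : prodL L' ∈ Vc (n+1) :=
        ih L' hlen' (fun p hp => hadm p (List.mem_append_left _ hp)) (n+1) hL'cost
      have ha' : a.1 ∈ Vc (n+1) := helt a (List.mem_append_right _ (by simp))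
      have hpr : prodL (L' ++ [a]) = prodL L' * a.1 := by
        rw [prodL_append, prodL_cons, prodL_nil, mul_one]
      rw [hpr]
      exact Vc_sq Vc h1 h3 n (Set.mul_mem_mul hPL' ha')
    | cons e R' =>
      set P := (splitB ((2⁻¹:ℝ)^(n+1)) (L' ++ [a])).1 with hPdef
      rw [hsp] at hPR
      have hrest : (2⁻¹:ℝ)^(n+1) ≤ costL P + cost e := splitB_rest _ _ _ _ hsp
      have hmemP : ∀ p ∈ P, p ∈ L' ++ [a] := fun p hp => by
        rw [← hPR]; exact List.mem_append_left _ hp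
      have hmemR : ∀ p ∈ e :: R', p ∈ L' ++ [a] := fun p hp => by
        rw [← hPR]; exact List.mem_append_right _ hp
      have hcostsplit : costL (L' ++ [a]) = costL P + cost e + costL R' := by
        rw [← hPR, costL_append, costL_cons]; ring
      have hlen2 : P.length ≤ len ∧ R'.length ≤ len := by
        have h9 : P.length + (1 + R'.length) = (L' ++ [a]).length := by
          rw [← hPR]; simp; omega
        simp at hL h9 ⊢; omega
      have hPmem : prodL P ∈ Vc (n+1) :=
        ih P hlen2.1 (fun p hp => hadm p (hmemP p hp)) (n+1) hPcost
      have heV : e.1 ∈ Vc (n+1) := helt e (hmemR e (by simp))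
      have hR'cost : costL R' < (2⁻¹:ℝ)^(n+1) := by
        have hpow : (2⁻¹:ℝ)^n = (2⁻¹:ℝ)^(n+1) + (2⁻¹:ℝ)^(n+1) := by ring
        rw [hcostsplit] at hcost
        linarith
      have hR'prod : prodL R' ∈ Vc (n+1) :=
        ih R' hlen2.2 (fun p hp => hadm p (hmemR p (by simp [hp]))) (n+1) hR'cost
      have hprodsplit : prodL (L' ++ [a]) = prodL P * e.1 * prodL R' := by
        rw [← hPR, prodL_append, prodL_cons, mul_assoc]
      rw [hprodsplit]
      exact h3 n (Set.mul_mem_mul (Set.mul_mem_mul hPmem heV) hR'prod)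

include h1 h3 in
lemma mainComb (F : Finset G) (hF1 : (1:G) ∈ F) :
    ∀ (len : ℕ) (L : List (Step G)), L.length ≤ len →
    (∀ p ∈ L, Adm Vc gs p) → (∀ p ∈ L, ∀ k, p.2 = Sum.inl k → p.1 ∈ (F : Set G)) →
    ∀ (s : ℝ) (m : ℕ), costL L ≤ s → 4 * s + 1 ≤ (m : ℝ) →
    prodL L ∈ ((F : Set G) * Vc 0) ^ m := by
  have hone : (1:G) ∈ (F : Set G) * Vc 0 := by
    have := Set.mul_mem_mul (show (1:G) ∈ (F:Set G) from hF1) (h1 0)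
    simpa using this
  intro len
  induction len with
  | zero =>
    intro L hL _ _ s m hcost hm
    rw [List.length_eq_zero_iff.1 (Nat.le_zero.1 hL)]
    have hm1 : 1 ≤ m := by
      have h0 : (0:ℝ) ≤ s := le_trans (costL_nonneg _) hcost
      have : (1:ℝ) ≤ (m:ℝ) := by linarith
      exact_mod_cast this
    rw [prodL_nil]
    exact Set.pow_subset_pow_right hone hm1 (by rw [pow_one]; exact hone)
  | succ len ih =>
    intro L hL hadm hgen s m hcost hm
    have hs0 : (0:ℝ) ≤ s := le_trans (costL_nonneg _) hcost
    have hm1 : 1 ≤ m := by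
      have : (1:ℝ) ≤ (m:ℝ) := by linarith
      exact_mod_cast this
    have hPR := splitB_append (1:ℝ) L
    have hPcost : costL (splitB (1:ℝ) L).1 < 1 := splitB_cost _ one_pos _
    have hPV : ∀ p ∈ (splitB (1:ℝ) L).1, ∃ j, p.2 = Sum.inr j ∧ p.1 ∈ Vc j := by
      intro p hp
      have hsm : cost p < 1 := splitB_small _ _ _ hp
      have hpL : p ∈ L := by rw [← hPR]; exact List.mem_append_left _ hp
      rcases h2 : p.2 with k | j
      · exfalso
        have : cost p = (k:ℝ) + 1 := by rw [← cost_inl p.1 k, ← h2]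
        rw [this] at hsm
        have : (0:ℝ) ≤ (k:ℝ) := Nat.cast_nonneg k
        linarith
      · refine ⟨j, rfl, ?_⟩
        have := hadm p hpL
        rw [Adm, h2] at this
        exact this
    have hPprod : prodL (splitB (1:ℝ) L).1 ∈ Vc 0 := by
      have : (1:ℝ) = (2⁻¹:ℝ)^(0:ℕ) := by norm_num
      exact chainA Vc h1 h3 (splitB (1:ℝ) L).1.length _ le_rfl hPV 0 (by rw [← this]; exact hPcost)
    cases hsp : (splitB (1:ℝ) L).2 with
    | nil =>
      rw [hsp, List.append_nil] at hPR
      have : prodL L ∈ ((F : Set G) * Vc 0) ^ 1 := by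
        rw [pow_one, ← hPR]
        exact ⟨1, hF1, prodL (splitB (1:ℝ) L).1, hPprod, one_mul _⟩
      exact Set.pow_subset_pow_right hone hm1 this
    | cons e R' =>
      set P := (splitB (1:ℝ) L).1 with hPdef
      rw [hsp] at hPR
      have hrest : (1:ℝ) ≤ costL P + cost e := splitB_rest _ _ _ _ hsp
      have heL : e ∈ L := by rw [← hPR]; exact List.mem_append_right _ (by simp)
      have hcostsplit : costL L = costL P + cost e + costL R' := by
        rw [← hPR, costL_append, costL_cons]; ring
      have hR'cost : costL R' ≤ s - 1 := by
        rw [hcostsplit] at hcost; linarith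
      have hs1 : (1:ℝ) ≤ s := by
        have := costL_nonneg R'; rw [hcostsplit] at hcost; linarith
      have hm5 : 5 ≤ m := by
        have : (5:ℝ) ≤ (m:ℝ) := by linarith
        exact_mod_cast this
      have heFW : e.1 ∈ (F : Set G) * Vc 0 := by
        rcases h2 : e.2 with k | j
        · exact ⟨e.1, hgen e heL k h2, 1, h1 0, mul_one _⟩
        · have := hadm e heL
          rw [Adm, h2] at this
          exact ⟨1, hF1, e.1, Vc_mono Vc h1 h3 (Nat.zero_le j) this, one_mul _⟩
      have hlen2 : R'.length ≤ len := by
        have h9 : P.length + (1 + R'.length) = L.length := by rw [← hPR]; simp; omega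
        omega
      have hR'prod : prodL R' ∈ ((F : Set G) * Vc 0) ^ (m - 2) := by
        refine ih R' hlen2 (fun p hp => hadm p (by rw [← hPR]; exact List.mem_append_right _ (by simp [hp])))
          (fun p hp k hk => hgen p (by rw [← hPR]; exact List.mem_append_right _ (by simp [hp])) k hk)
          (s - 1) (m - 2) hR'cost ?_
        have hcast : ((m - 2 : ℕ) : ℝ) = (m : ℝ) - 2 := by
          have : (2:ℕ) ≤ m := by omega
          push_cast [Nat.cast_sub this]; ring
        rw [hcast]; linarith
      have hprodsplit : prodL L = prodL P * e.1 * prodL R' := by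
        rw [← hPR, prodL_append, prodL_cons, mul_assoc]
      rw [hprodsplit]
      have hsplitpow : ((F : Set G) * Vc 0) ^ m
          = ((F : Set G) * Vc 0) * ((F : Set G) * Vc 0) * ((F : Set G) * Vc 0) ^ (m - 2) := by
        rw [← sq, ← pow_add]
        congr 1
        omega
      rw [hsplitpow]
      exact Set.mul_mem_mul (Set.mul_mem_mul (⟨1, hF1, _, hPprod, one_mul _⟩) heFW) hR'prod

end chain

section rho
variable [TopologicalSpace G] [IsTopologicalGroup G]
variable (Vc : ℕ → Set G) (gs : ℕ → G)

def SS (x : G) : Set ℝ :=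
  {r | ∃ L : List (Step G), (∀ p ∈ L, Adm Vc gs p) ∧ prodL L = x ∧ costL L = r}

noncomputable def rho (x : G) : ℝ := sInf (SS Vc gs x)

omit [TopologicalSpace G] [IsTopologicalGroup G] in
lemma SS_nonneg {x : G} {r : ℝ} (h : r ∈ SS Vc gs x) : 0 ≤ r := by
  obtain ⟨L, _, _, rfl⟩ := h; exact costL_nonneg L

omit [TopologicalSpace G] [IsTopologicalGroup G] in
lemma SS_bddBelow (x : G) : BddBelow (SS Vc gs x) :=
  ⟨0, fun r hr => SS_nonneg Vc gs hr⟩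

omit [TopologicalSpace G] [IsTopologicalGroup G] in
lemma SS_mul {x y : G} {r t : ℝ} (hr : r ∈ SS Vc gs x) (ht : t ∈ SS Vc gs y) :
    r + t ∈ SS Vc gs (x * y) := by
  obtain ⟨L₁, hA₁, hp₁, rfl⟩ := hr
  obtain ⟨L₂, hA₂, hp₂, rfl⟩ := ht
  exact ⟨L₁ ++ L₂, fun p hp => (List.mem_append.1 hp).elim (hA₁ p) (hA₂ p),
    by rw [prodL_append, hp₁, hp₂], by rw [costL_append]⟩

omit [TopologicalSpace G] [IsTopologicalGroup G] in
lemma SS_one : (0:ℝ) ∈ SS Vc gs 1 := ⟨[], by simp, prodL_nil, costL_nil⟩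

omit [TopologicalSpace G] [IsTopologicalGroup G] in
lemma SS_single {a : G} {j : ℕ} (h : a ∈ Vc j) : ((2⁻¹:ℝ)^j) ∈ SS Vc gs a :=
  ⟨[(a, Sum.inr j)], by rintro p hp; simp at hp; subst hp; exact h,
    by simp [prodL], by simp [costL, cost]⟩

omit [TopologicalSpace G] [IsTopologicalGroup G] in
lemma SS_inv (hsym : ∀ n, (Vc n)⁻¹ = Vc n) {x : G} {r : ℝ} (h : r ∈ SS Vc gs x) :
    r ∈ SS Vc gs x⁻¹ := by
  obtain ⟨L, hA, hp, rfl⟩ := h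
  refine ⟨(L.map fun p => (p.1⁻¹, p.2)).reverse, ?_, ?_, ?_⟩
  · intro p hp
    rw [List.mem_reverse, List.mem_map] at hp
    obtain ⟨q, hq, rfl⟩ := hp
    have hAq := hA q hq
    rcases h2 : q.2 with k | j
    · rw [Adm, h2] at hAq
      simp only [Adm, Sum.elim_inl] at hAq ⊢
      rcases hAq with h' | h'
      · exact Or.inr (by rw [h'])
      · exact Or.inl (by rw [h', inv_inv])
    · rw [Adm, h2] at hAq
      simp only [Adm, Sum.elim_inr] at hAq ⊢
      rw [← hsym j]; simpa using hAq
  · show ((((L.map fun p => (p.1⁻¹, p.2)).reverse).map Prod.fst)).prod = x⁻¹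
    rw [← hp, List.map_reverse, List.map_map]
    show ((L.map fun p => p.1⁻¹).reverse).prod = (prodL L)⁻¹
    rw [prodL, List.prod_inv_reverse, List.map_map]
    rfl
  · show ((((L.map fun p => (p.1⁻¹, p.2)).reverse).map cost)).sum = costL L
    rw [List.map_reverse, List.sum_reverse, List.map_map]
    rfl

lemma SS_nonempty (hV0o : IsOpen (Vc 0)) (h10 : (1:G) ∈ Vc 0)
    (hsym : ∀ n, (Vc n)⁻¹ = Vc n) (hdense : DenseRange gs) (x : G) :
    (SS Vc gs x).Nonempty := by
  have hop : IsOpen ((fun y => x⁻¹ * y) ⁻¹' Vc 0) :=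
    hV0o.preimage (continuous_const.mul continuous_id)
  have hne : ((fun y => x⁻¹ * y) ⁻¹' Vc 0).Nonempty := ⟨x, by simpa using h10⟩
  obtain ⟨k, hg⟩ := hdense.exists_mem_open hop hne
  set w : G := x⁻¹ * gs k with hwdef
  have hw : w ∈ Vc 0 := hg
  have hweq : gs k = x * w := by rw [hwdef]; group
  refine ⟨(k:ℝ) + 1 + (2⁻¹:ℝ)^(0:ℕ),
    ⟨[(gs k, Sum.inl k), (w⁻¹, Sum.inr 0)], ?_, ?_, ?_⟩⟩
  · rintro p hp
    simp only [List.mem_cons, List.mem_singleton, List.not_mem_nil, or_false] at hp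
    rcases hp with rfl | rfl
    · exact Or.inl rfl
    · show w⁻¹ ∈ Vc 0
      rw [← hsym 0]; simpa using hw
  · show gs k * (w⁻¹ * 1) = x
    rw [mul_one, hweq]; group
  · simp [costL, cost]

lemma rho_nonneg (x : G) : 0 ≤ rho Vc gs x := by
  rcases Set.eq_empty_or_nonempty (SS Vc gs x) with h | h
  · rw [rho, h, Real.sInf_empty]
  · exact le_csInf h fun r hr => SS_nonneg Vc gs hr

lemma rho_one : rho Vc gs 1 = 0 :=
  le_antisymm (csInf_le (SS_bddBelow Vc gs 1) (SS_one Vc gs)) (rho_nonneg Vc gs 1)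

lemma rho_le_single {a : G} {j : ℕ} (h : a ∈ Vc j) : rho Vc gs a ≤ (2⁻¹:ℝ)^j :=
  csInf_le (SS_bddBelow Vc gs a) (SS_single Vc gs h)

lemma rho_mul (hV0o : IsOpen (Vc 0)) (h10 : (1:G) ∈ Vc 0)
    (hsym : ∀ n, (Vc n)⁻¹ = Vc n) (hdense : DenseRange gs) (x y : G) :
    rho Vc gs (x * y) ≤ rho Vc gs x + rho Vc gs y := by
  have hx := SS_nonempty Vc gs hV0o h10 hsym hdense x
  have hy := SS_nonempty Vc gs hV0o h10 hsym hdense y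
  have key : ∀ t ∈ SS Vc gs y, rho Vc gs (x * y) ≤ rho Vc gs x + t := by
    intro t ht
    have : rho Vc gs (x * y) - t ≤ rho Vc gs x := by
      refine le_csInf hx fun r hr => ?_
      have := csInf_le (SS_bddBelow Vc gs (x * y)) (SS_mul Vc gs hr ht)
      rw [rho]; linarith
    linarith
  have : rho Vc gs (x * y) - rho Vc gs x ≤ rho Vc gs y := by
    refine le_csInf hy fun t ht => ?_
    have := key t ht; linarith
  linarith

lemma rho_inv (hsym : ∀ n, (Vc n)⁻¹ = Vc n) (x : G) :
    rho Vc gs x⁻¹ = rho Vc gs x := by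
  have hsub : ∀ z : G, SS Vc gs z ⊆ SS Vc gs z⁻¹ := fun z r hr => SS_inv Vc gs hsym hr
  have heq : SS Vc gs x⁻¹ = SS Vc gs x := by
    refine le_antisymm (fun r hr => ?_) (hsub x)
    have := hsub x⁻¹ hr
    rwa [inv_inv] at this
  rw [rho, rho, heq]

end rho
end CBAux

section CBPOW
variable {G : Type*} [Group G] [TopologicalSpace G] [IsTopologicalGroup G] [PolishSpace G]

lemma nbhd_step (S : Set G) (hSo : IsOpen S) (hS1 : (1:G) ∈ S) :
    ∃ T : Set G, (IsOpen T ∧ (1:G) ∈ T ∧ T⁻¹ = T) ∧ T * T * T ⊆ S := by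
  obtain ⟨T₁, hT₁o, hT₁1, hT₁⟩ := exists_open_nhds_one_mul_subset (hSo.mem_nhds hS1)
  obtain ⟨T₂, hT₂o, hT₂1, hT₂⟩ := exists_open_nhds_one_mul_subset (hT₁o.mem_nhds hT₁1)
  refine ⟨T₂ ∩ T₂⁻¹, ⟨hT₂o.inter hT₂o.inv, ⟨hT₂1, by simpa using hT₂1⟩, ?_⟩, ?_⟩
  · rw [Set.inter_inv, inv_inv, Set.inter_comm]
  · have hsub : T₂ ∩ T₂⁻¹ ⊆ T₂ := inter_subset_left
    have h21 : T₂ ⊆ T₁ := fun a ha => by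
      have : a * 1 ∈ T₁ := hT₂ (Set.mul_mem_mul ha hT₂1)
      simpa using this
    calc (T₂ ∩ T₂⁻¹) * (T₂ ∩ T₂⁻¹) * (T₂ ∩ T₂⁻¹)
        ⊆ T₂ * T₂ * T₂ := Set.mul_subset_mul (Set.mul_subset_mul hsub hsub) hsub
      _ ⊆ T₁ * T₂ := Set.mul_subset_mul hT₂ (fun a ha => ha)
      _ ⊆ T₁ * T₁ := Set.mul_subset_mul (fun a ha => ha) h21
      _ ⊆ S := hT₁

lemma cb_subset_pow {A W : Set G} (hWo : IsOpen W) (hW1 : (1:G) ∈ W) (hWs : W⁻¹ = W)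
    (hA : IsCoarselyBounded A) :
    ∃ (F : Finset G) (m : ℕ), A ⊆ ((F : Set G) * W) ^ m := by
  classical
  by_contra hcon
  push_neg at hcon
  -- a decreasing chain of symmetric open neighborhoods
  let P : Set G → Prop := fun S => IsOpen S ∧ (1:G) ∈ S ∧ S⁻¹ = S
  have step : ∀ S : {S : Set G // P S}, ∃ T : {T : Set G // P T},
      (T : Set G) * T * T ⊆ S := by
    rintro ⟨S, hSo, hS1, hSs⟩
    obtain ⟨T, hT, hT3⟩ := nbhd_step S hSo hS1
    exact ⟨⟨T, hT⟩, hT3⟩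
  choose nxt hnxt using step
  let c : ℕ → {S : Set G // P S} := fun n => Nat.rec ⟨W, hWo, hW1, hWs⟩ (fun _ p => nxt p) n
  let Vc : ℕ → Set G := fun n => (c n).1
  have h3 : ∀ n, Vc (n+1) * Vc (n+1) * Vc (n+1) ⊆ Vc n := fun n => hnxt (c n)
  have h1 : ∀ n, (1:G) ∈ Vc n := fun n => (c n).2.2.1
  have ho : ∀ n, IsOpen (Vc n) := fun n => (c n).2.1
  have hs : ∀ n, (Vc n)⁻¹ = Vc n := fun n => (c n).2.2.2
  have hV0 : Vc 0 = W := rfl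
  -- dense sequence
  have hsep : TopologicalSpace.SeparableSpace G := inferInstance
  have hnon : Nonempty G := ⟨1⟩
  let gs : ℕ → G := TopologicalSpace.denseSeq G
  have hdense : DenseRange gs := TopologicalSpace.denseRange_denseSeq G
  -- the pseudometric
  let d : G → G → ℝ := fun x y => CBAux.rho Vc gs (x⁻¹ * y)
  have hrefl : ∀ x, d x x = 0 := fun x => by
    show CBAux.rho Vc gs (x⁻¹ * x) = 0
    rw [inv_mul_cancel]; exact CBAux.rho_one Vc gs
  have hsymm : ∀ x y, d x y = d y x := fun x y => by
    show CBAux.rho Vc gs (x⁻¹ * y) = CBAux.rho Vc gs (y⁻¹ * x)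
    rw [← CBAux.rho_inv Vc gs hs (y⁻¹ * x)]
    congr 1; group
  have htri : ∀ x y z, d x z ≤ d x y + d y z := fun x y z => by
    show CBAux.rho Vc gs (x⁻¹ * z) ≤ _
    have : x⁻¹ * z = (x⁻¹ * y) * (y⁻¹ * z) := by group
    rw [this]
    exact CBAux.rho_mul Vc gs (hV0 ▸ hWo) (h1 0) hs hdense _ _
  have hinv : ∀ g x y, d (g * x) (g * y) = d x y := fun g x y => by
    show CBAux.rho Vc gs ((g*x)⁻¹ * (g*y)) = CBAux.rho Vc gs (x⁻¹ * y)
    congr 1; group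
  have hcont : Continuous (fun p : G × G => d p.1 p.2) := by
    rw [continuous_iff_continuousAt]
    rintro ⟨x₀, y₀⟩
    rw [ContinuousAt, Metric.tendsto_nhds]
    intro ε hε
    obtain ⟨j, hj⟩ : ∃ j : ℕ, (2⁻¹:ℝ)^j < ε/2 :=
      exists_pow_lt_of_lt_one (by linarith) (by norm_num)
    have hmem1 : (fun x : G => x₀⁻¹ * x) ⁻¹' (Vc j) ∈ nhds x₀ := by
      refine (ho j).preimage (continuous_const.mul continuous_id) |>.mem_nhds ?_
      simpa using h1 j
    have hmem2 : (fun y : G => y₀⁻¹ * y) ⁻¹' (Vc j) ∈ nhds y₀ := by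
      refine (ho j).preimage (continuous_const.mul continuous_id) |>.mem_nhds ?_
      simpa using h1 j
    filter_upwards [prod_mem_nhds hmem1 hmem2] with q hq
    obtain ⟨hq1, hq2⟩ := hq
    have hb1 : d x₀ q.1 ≤ (2⁻¹:ℝ)^j := CBAux.rho_le_single Vc gs hq1
    have hb2 : d y₀ q.2 ≤ (2⁻¹:ℝ)^j := CBAux.rho_le_single Vc gs hq2
    have h1' : d q.1 q.2 ≤ d q.1 x₀ + d x₀ y₀ + d y₀ q.2 :=
      le_trans (htri q.1 x₀ q.2) (by linarith [htri x₀ y₀ q.2])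
    have h2' : d x₀ y₀ ≤ d x₀ q.1 + d q.1 q.2 + d q.2 y₀ :=
      le_trans (htri x₀ q.1 y₀) (by linarith [htri q.1 q.2 y₀])
    have e1 : d q.1 x₀ = d x₀ q.1 := hsymm _ _
    have e2 : d q.2 y₀ = d y₀ q.2 := hsymm _ _
    rw [Real.dist_eq, abs_sub_lt_iff]
    constructor <;> [skip; skip] <;> nlinarith [CBAux.rho_nonneg Vc gs (q.1⁻¹ * q.2)]
  obtain ⟨C, hC⟩ := hA d hcont hrefl hsymm htri hinv
  -- A is nonempty
  obtain ⟨a₀, ha₀, -⟩ := Set.not_subset.1 (hcon ∅ 0)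
  have hbound : ∀ x ∈ A, CBAux.rho Vc gs x ≤ CBAux.rho Vc gs a₀ + C := by
    intro x hx
    have h1' : CBAux.rho Vc gs x = CBAux.rho Vc gs (a₀ * (a₀⁻¹ * x)) := by congr 1; group
    rw [h1']
    have := CBAux.rho_mul Vc gs (hV0 ▸ hWo) (h1 0) hs hdense a₀ (a₀⁻¹ * x)
    have hd : d a₀ x ≤ C := hC a₀ ha₀ x hx
    exact le_trans this (by linarith)
  set n : ℕ := ⌈CBAux.rho Vc gs a₀ + C⌉₊ + 1 with hn
  have hnbound : ∀ x ∈ A, CBAux.rho Vc gs x < (n:ℝ) := by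
    intro x hx
    have := hbound x hx
    have h2' : CBAux.rho Vc gs a₀ + C ≤ (⌈CBAux.rho Vc gs a₀ + C⌉₊ : ℝ) := Nat.le_ceil _
    have : (⌈CBAux.rho Vc gs a₀ + C⌉₊ : ℝ) < (n:ℝ) := by rw [hn]; push_cast; linarith
    linarith
  set F : Finset G := insert 1 ((Finset.range (n+1)).image gs ∪
    (Finset.range (n+1)).image fun k => (gs k)⁻¹) with hF
  obtain ⟨x, hxA, hxnot⟩ := Set.not_subset.1 (hcon F (4*n+1))
  apply hxnot
  -- get a decomposition of x of cost < n
  have hSne := CBAux.SS_nonempty Vc gs (hV0 ▸ hWo) (h1 0) hs hdense x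
  obtain ⟨r, hrS, hrlt⟩ := exists_lt_of_csInf_lt hSne (hnbound x hxA)
  obtain ⟨L, hLadm, hLprod, hLcost⟩ := hrS
  have hgen : ∀ p ∈ L, ∀ k, (p : CBAux.Step G).2 = Sum.inl k → p.1 ∈ (F : Set G) := by
    intro p hp k hk
    have hcost : CBAux.cost p = (k:ℝ) + 1 := by rw [← CBAux.cost_inl p.1 k, ← hk]
    have hle : CBAux.cost p ≤ CBAux.costL L := CBAux.cost_le_costL hp
    have hklt : (k:ℝ) + 1 < (n:ℝ) := by
      rw [hLcost] at hle
      rw [hcost] at hle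
      linarith
    have hklt' : (k:ℝ) < (n:ℝ) + 1 := by linarith
    have hkn : k < n + 1 := by exact_mod_cast hklt'
    have hadm := hLadm p hp
    rw [CBAux.Adm, hk] at hadm
    simp only [Sum.elim_inl] at hadm
    rcases hadm with h' | h'
    · rw [h']
      have hmemF : gs k ∈ F := by
        rw [hF]
        exact Finset.mem_insert_of_mem (Finset.mem_union_left _
          (Finset.mem_image.2 ⟨k, Finset.mem_range.2 hkn, rfl⟩))
      exact_mod_cast hmemF
    · rw [h']
      have hmemF : (gs k)⁻¹ ∈ F := by
        rw [hF]
        exact Finset.mem_insert_of_mem (Finset.mem_union_right _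
          (Finset.mem_image.2 ⟨k, Finset.mem_range.2 hkn, rfl⟩))
      exact_mod_cast hmemF
  have hF1 : (1:G) ∈ F := by rw [hF]; simp
  have := CBAux.mainComb Vc gs h1 h3 F hF1 L.length L le_rfl hLadm hgen (n:ℝ) (4*n+1)
    (by rw [hLcost]; linarith) (by push_cast; linarith)
  rw [hLprod, hV0] at this
  exact this
end CBPOW


section main
variable {G : Type*} [Group G] [TopologicalSpace G] [IsTopologicalGroup G]

lemma rpc_open_cb {U : Set G} (hUo : IsOpen U) (hU1 : (1:G) ∈ U)
    (hU : RoelckePrecompact U) : IsCoarselyBounded U := by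
  intro d hcont hrefl hsymm htri hinv
  have hdc : Continuous fun x : G => d 1 x :=
    hcont.comp (continuous_const.prodMk continuous_id)
  have hVo : IsOpen {x : G | d 1 x < 1} := isOpen_lt hdc continuous_const
  have hV1 : (1:G) ∈ {x : G | d 1 x < 1} := by simp [hrefl 1]
  obtain ⟨F, hF⟩ := hU _ (hVo.mem_nhds hV1)
  obtain ⟨C₀, hC₀⟩ := (F.image fun f => d 1 f).exists_le
  have hC₀' : ∀ f ∈ F, d 1 f ≤ C₀ := fun f hf =>
    hC₀ _ (Finset.mem_image_of_mem _ hf)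
  have key : ∀ z ∈ U, d 1 z ≤ C₀ + 2 := by
    intro z hz
    obtain ⟨y, hy, w, hw, rfl⟩ := hF hz
    obtain ⟨v, hv, f, hfF, rfl⟩ := hy
    have e1 : d v (v * (f * w)) = d 1 (f * w) := by
      have := hinv v 1 (f * w); rwa [mul_one] at this
    have e2 : d f (f * w) = d 1 w := by
      have := hinv f 1 w; rwa [mul_one] at this
    have t1 : d 1 (v * f * w) ≤ d 1 v + d v (v * f * w) := htri 1 v _
    have hre : v * f * w = v * (f * w) := by group
    have t2 : d 1 (f * w) ≤ d 1 f + d f (f * w) := htri 1 f _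
    have hfC : d 1 f ≤ C₀ := hC₀' f (by exact_mod_cast hfF)
    have hv1 : d 1 v < 1 := hv
    have hw1 : d 1 w < 1 := hw
    rw [hre] at t1
    rw [e1] at t1
    rw [e2] at t2
    have : d 1 (v * (f * w)) ≤ d 1 v + (d 1 f + d 1 w) := by linarith
    rw [← hre] at this
    linarith
  refine ⟨2 * (C₀ + 2), fun x hx y hy => ?_⟩
  have t : d x y ≤ d x 1 + d 1 y := htri x 1 y
  have e : d x 1 = d 1 x := hsymm x 1
  have b1 := key x hx
  have b2 := key y hy
  linarith

end main

/-- A Polish group is locally Roelcke precompact if and only if it is locally bounded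
(some identity neighborhood is coarsely bounded) and every coarsely bounded subset is
Roelcke precompact. -/
theorem locallyRoelckePrecompact_iff_locallyBounded_and_cb_eq_rpc
    (G : Type*) [Group G] [TopologicalSpace G] [IsTopologicalGroup G] [PolishSpace G] :
    LocallyRoelckePrecompact G ↔
      ((∃ V ∈ nhds (1 : G), IsCoarselyBounded V) ∧
        ∀ A : Set G, IsCoarselyBounded A → RoelckePrecompact A) := by
  constructor
  · rintro ⟨U, hUo, hU1, hU⟩
    refine ⟨⟨U, hUo.mem_nhds hU1, rpc_open_cb hUo hU1 hU⟩, ?_⟩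
    intro A hA
    -- a symmetric open neighborhood inside U
    set W : Set G := U ∩ U⁻¹ with hWdef
    have hWo : IsOpen W := hUo.inter hUo.inv
    have hW1 : (1:G) ∈ W := ⟨hU1, by simpa using hU1⟩
    have hWs : W⁻¹ = W := by rw [hWdef, Set.inter_inv, inv_inv, Set.inter_comm]
    have hWU : W ⊆ U := inter_subset_left
    obtain ⟨F, m, hsub⟩ := cb_subset_pow hWo hW1 hWs hA
    have hrpc : RoelckePrecompact (((F : Set G) * W) ^ m) :=
      rpc_pow hUo hU1 hU (rpc_mul hUo hU1 hU (rpc_finset F) (rpc_mono hWU hU)) m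
    intro V hV
    obtain ⟨F', hF'⟩ := hrpc V hV
    exact ⟨F', hsub.trans hF'⟩
  · rintro ⟨⟨V, hV, hVcb⟩, hcb⟩
    obtain ⟨U, hUsub, hUo, hU1⟩ := mem_nhds_iff.1 hV
    refine ⟨U, hUo, hU1, hcb U ?_⟩
    intro d hc h0 hs ht hi
    obtain ⟨C, hC⟩ := hVcb d hc h0 hs ht hi
    exact ⟨C, fun x hx y hy => hC x (hUsub hx) y (hUsub hy)⟩
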